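/- Let R be a commutative ring of characteristic 2 and let A₁, A₂, B₁, B₂, C₁, C₂, D₁, D₂ be k×k circulant matrices over R. Let Ω be the 4k×4k block matrix (A₁, B₁, C₁, D₁; B₁ᵀ, A₁ᵀ, D₁ᵀ, C₁ᵀ; C₂, D₂, A₂, B₂; D₂ᵀ, C₂ᵀ, B₂ᵀ, A₂ᵀ). Then Ω·Ωᵀ = I_{4k} if and only if: A₁A₁ᵀ + B₁B₁ᵀ + C₁C₁ᵀ + D₁D₁ᵀ = I_k, A₂A₂ᵀ + B₂B₂ᵀ + C₂C₂ᵀ + D₂D₂ᵀ = I_k, A₁C₂ᵀ + B₁D₂ᵀ + C₁A₂ᵀ + D₁B₂ᵀ = 0, and A₁D₂ + B₁C₂ + C₁B₂ + D₁A₂ = 0. -/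
import Mathlib


open Matrix

/-- The cyclic right-shift permutation matrix `P = (0, I_{n-1}; 1, 0)`. -/
def shiftP (n : ℕ) [NeZero n] (R : Type*) [CommRing R] : Matrix (Fin n) (Fin n) R :=
  Matrix.of fun i j => if j = i + 1 then (1 : R) else 0

/-- The circulant matrix `cir (b₀, …, b_{n-1})`, whose `(i, j)` entry is `b_{(j-i) mod n}`. -/
def cir {R : Type*} [CommRing R] {n : ℕ} (b : Fin n → R) : Matrix (Fin n) (Fin n) R :=
  Matrix.of fun i j => b (j - i)

lemma cir_eq_circulant {R : Type*} [CommRing R] {n : ℕ} (b : Fin n → R) :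
    cir b = Matrix.circulant (fun i => b (-i)) := by
  ext i j
  haveI : NeZero n := ⟨i.pos.ne'⟩
  simp [cir, Matrix.circulant_apply, neg_sub]

lemma cirT {R : Type*} [CommRing R] {n : ℕ} {A : Matrix (Fin n) (Fin n) R} (h : ∃ a, A = cir a) :
    ∃ a, Aᵀ = cir a := by
  obtain ⟨a, rfl⟩ := h
  refine ⟨fun i => a (-i), ?_⟩
  ext i j
  haveI : NeZero n := ⟨i.pos.ne'⟩
  simp [cir, neg_sub]

lemma cir_comm {R : Type*} [CommRing R] {n : ℕ} {A B : Matrix (Fin n) (Fin n) R}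
    (hA : ∃ a, A = cir a) (hB : ∃ b, B = cir b) : A * B = B * A := by
  obtain ⟨a, rfl⟩ := hA; obtain ⟨b, rfl⟩ := hB
  rw [cir_eq_circulant a, cir_eq_circulant b, Matrix.Fin.circulant_mul_comm]

/-- Theorem 3.1 (length 40 construction): for `k×k` circulant matrices
`A₁, B₁, C₁, D₁, A₂, B₂, C₂, D₂` over a commutative ring of characteristic 2, the block matrix
`Ω = (A₁ B₁ C₁ D₁; B₁ᵀ A₁ᵀ D₁ᵀ C₁ᵀ; C₂ D₂ A₂ B₂; D₂ᵀ C₂ᵀ B₂ᵀ A₂ᵀ)` satisfies `Ω Ωᵀ = I`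
iff the four stated conditions hold. -/
theorem omega_two_level_selfdual_iff {R : Type*} [CommRing R] [CharP R 2] {k : ℕ}
    (A₁ A₂ B₁ B₂ C₁ C₂ D₁ D₂ : Matrix (Fin k) (Fin k) R)
    (hA₁ : ∃ a, A₁ = cir a) (hA₂ : ∃ a, A₂ = cir a) (hB₁ : ∃ b, B₁ = cir b)
    (hB₂ : ∃ b, B₂ = cir b) (hC₁ : ∃ c, C₁ = cir c) (hC₂ : ∃ c, C₂ = cir c)
    (hD₁ : ∃ d, D₁ = cir d) (hD₂ : ∃ d, D₂ = cir d) :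
    (Matrix.fromBlocks
        (Matrix.fromBlocks A₁ B₁ B₁ᵀ A₁ᵀ) (Matrix.fromBlocks C₁ D₁ D₁ᵀ C₁ᵀ)
        (Matrix.fromBlocks C₂ D₂ D₂ᵀ C₂ᵀ) (Matrix.fromBlocks A₂ B₂ B₂ᵀ A₂ᵀ)) *
      (Matrix.fromBlocks
        (Matrix.fromBlocks A₁ B₁ B₁ᵀ A₁ᵀ) (Matrix.fromBlocks C₁ D₁ D₁ᵀ C₁ᵀ)
        (Matrix.fromBlocks C₂ D₂ D₂ᵀ C₂ᵀ) (Matrix.fromBlocks A₂ B₂ B₂ᵀ A₂ᵀ))ᵀ = 1 ↔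
    (A₁ * A₁ᵀ + B₁ * B₁ᵀ + C₁ * C₁ᵀ + D₁ * D₁ᵀ = 1 ∧
     A₂ * A₂ᵀ + B₂ * B₂ᵀ + C₂ * C₂ᵀ + D₂ * D₂ᵀ = 1 ∧
     A₁ * C₂ᵀ + B₁ * D₂ᵀ + C₁ * A₂ᵀ + D₁ * B₂ᵀ = 0 ∧
     A₁ * D₂ + B₁ * C₂ + C₁ * B₂ + D₁ * A₂ = 0) := by
  have hA₁' := cirT hA₁; have hA₂' := cirT hA₂
  have hB₁' := cirT hB₁; have hB₂' := cirT hB₂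
  have hC₁' := cirT hC₁; have hC₂' := cirT hC₂
  have hD₁' := cirT hD₁; have hD₂' := cirT hD₂
  have hadd : ∀ M : Matrix (Fin k) (Fin k) R, M + M = 0 := fun M => by
    ext i j; simp [Matrix.add_apply, CharTwo.add_self_eq_zero]
  simp only [Matrix.fromBlocks_transpose, Matrix.fromBlocks_multiply, Matrix.fromBlocks_add,
    Matrix.transpose_transpose, ← Matrix.fromBlocks_one, ← Matrix.fromBlocks_zero,
    Matrix.fromBlocks_inj]
  constructor
  · rintro ⟨⟨g1, -, -, -⟩, ⟨g5, g6, -, -⟩, -, g13, -⟩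
    refine ⟨by rw [← g1]; abel, by rw [← g13]; abel, by rw [← g5]; abel, by rw [← g6]; abel⟩
  · rintro ⟨e1, e2, e3, e4⟩
    have e3t := congrArg Matrix.transpose e3
    have e4t := congrArg Matrix.transpose e4
    simp only [Matrix.transpose_add, Matrix.transpose_mul, Matrix.transpose_zero, Matrix.transpose_transpose] at e3t e4t
    refine ⟨⟨?_, ?_, ?_, ?_⟩, ⟨?_, ?_, ?_, ?_⟩, ⟨?_, ?_, ?_, ?_⟩, ?_, ?_, ?_, ?_⟩
    · rw [← e1]; abel
    · rw [cir_comm hB₁ hA₁, cir_comm hD₁ hC₁, hadd, hadd, add_zero]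
    · rw [cir_comm hB₁' hA₁', cir_comm hD₁' hC₁', hadd, hadd, add_zero]
    · rw [cir_comm hB₁' hB₁, cir_comm hA₁' hA₁, cir_comm hD₁' hD₁, cir_comm hC₁' hC₁, ← e1]; abel
    · rw [← e3]; abel
    · rw [← e4]; abel
    · rw [cir_comm hB₁' hC₂', cir_comm hA₁' hD₂', cir_comm hD₁' hA₂', cir_comm hC₁' hB₂',
        ← e4t]; abel
    · rw [cir_comm hB₁' hD₂, cir_comm hA₁' hC₂, cir_comm hD₁' hB₂, cir_comm hC₁' hA₂,
        ← e3t]; abel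
    · rw [← e3t]; abel
    · rw [cir_comm hC₂ hB₁, cir_comm hD₂ hA₁, cir_comm hA₂ hD₁, cir_comm hB₂ hC₁, ← e4]; abel
    · rw [← e4t]; abel
    · rw [cir_comm hD₂' hB₁, cir_comm hC₂' hA₁, cir_comm hB₂' hD₁, cir_comm hA₂' hC₁,
        ← e3]; abel
    · rw [← e2]; abel
    · rw [cir_comm hC₂ hD₂, cir_comm hA₂ hB₂, hadd, hadd, add_zero]
    · rw [cir_comm hD₂' hC₂', cir_comm hB₂' hA₂', hadd, hadd, add_zero]
    · rw [cir_comm hD₂' hD₂, cir_comm hC₂' hC₂, cir_comm hB₂' hB₂, cir_comm hA₂' hA₂, ← e2]; abel
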